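/- Let X be a real-valued random variable with P(X = −1/(1−a)) = 1 − a and P(X > x) = ∫_x^∞ dt/(t² (ln t)(ln ln t)²) for x ≥ e^e, where a = ∫_{e^e}^∞ dt/(t² (ln t)(ln ln t)²). Then E X = 0, E|X| < ∞, and for all sufficiently large n, E[X 1{|X| ≤ n}] = −1/ln ln n; consequently ∑_{n=2}^∞ |E[X 1{|X| ≤ n}]|^q / n = ∞ for every q > 1. -/

import Mathlib

open MeasureTheory ProbabilityTheory Set Filter Topology
open scoped NNReal ENNReal

namespace Stmt18

noncomputable def EE : ℝ := Real.exp (Real.exp 1)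
noncomputable def f (t : ℝ) : ℝ := 1 / (t ^ 2 * Real.log t * Real.log (Real.log t) ^ 2)
noncomputable def F (t : ℝ) : ℝ := (Real.log t)⁻¹ * t⁻¹ / Real.log (Real.log t) ^ 2
noncomputable def G (t : ℝ) : ℝ := -(Real.log (Real.log t))⁻¹

lemma EE_pos : (0:ℝ) < EE := Real.exp_pos _
lemma one_lt_EE : (1:ℝ) < EE := Real.one_lt_exp_iff.mpr (Real.exp_pos 1)
lemma log_EE : Real.log EE = Real.exp 1 := Real.log_exp _
lemma loglog_EE : Real.log (Real.log EE) = 1 := by rw [log_EE, Real.log_exp]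

lemma one_lt_log {t : ℝ} (ht : EE ≤ t) : 1 < Real.log t := by
  have : Real.exp 1 ≤ Real.log t := by
    rw [← log_EE]; exact Real.log_le_log EE_pos ht
  exact lt_of_lt_of_le (Real.one_lt_exp_iff.mpr one_pos) this

lemma loglog_ge_one {t : ℝ} (ht : EE ≤ t) : 1 ≤ Real.log (Real.log t) := by
  rw [← loglog_EE]
  exact Real.log_le_log (by rw [log_EE]; exact Real.exp_pos 1) (Real.log_le_log EE_pos ht)

lemma t_pos {t : ℝ} (ht : EE ≤ t) : 0 < t := lt_trans one_pos (lt_of_lt_of_le one_lt_EE ht)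

lemma loglog_pos {t : ℝ} (ht : EE ≤ t) : 0 < Real.log (Real.log t) :=
  lt_of_lt_of_le one_pos (loglog_ge_one ht)

lemma hasDerivAt_G {t : ℝ} (ht : EE ≤ t) : HasDerivAt G (F t) t := by
  have h0 : t ≠ 0 := (t_pos ht).ne'
  have h1 : Real.log t ≠ 0 := (lt_trans one_pos (one_lt_log ht)).ne'
  have h2 : Real.log (Real.log t) ≠ 0 := (loglog_pos ht).ne'
  have hll : HasDerivAt (fun s => Real.log (Real.log s)) ((Real.log t)⁻¹ * t⁻¹) t :=
    (Real.hasDerivAt_log h1).comp t (Real.hasDerivAt_log h0)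
  have := (hll.inv h2).neg
  exact this.congr_deriv (by unfold F; ring)

lemma F_nonneg {t : ℝ} (ht : EE ≤ t) : 0 ≤ F t := by
  have := t_pos ht; have := one_lt_log ht; have := loglog_pos ht
  unfold F; positivity

lemma tendsto_G : Tendsto G atTop (𝓝 0) := by
  have h : Tendsto (fun t => Real.log (Real.log t)) atTop atTop :=
    Real.tendsto_log_atTop.comp Real.tendsto_log_atTop
  have := (tendsto_inv_atTop_zero.comp h).neg
  unfold G; simpa using this

lemma contWithin_G : ContinuousWithinAt G (Ici EE) EE :=
  (hasDerivAt_G le_rfl).continuousAt.continuousWithinAt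

lemma integrableOn_F : IntegrableOn F (Ioi EE) := by
  exact integrableOn_Ioi_deriv_of_nonneg contWithin_G (fun x hx => hasDerivAt_G (le_of_lt hx))
    (fun x hx => F_nonneg (le_of_lt hx)) tendsto_G

lemma integral_F_Ioi : ∫ t in Ioi EE, F t = 1 := by
  rw [integral_Ioi_of_hasDerivAt_of_tendsto contWithin_G
    (fun x hx => hasDerivAt_G (le_of_lt hx)) integrableOn_F tendsto_G]
  unfold G; rw [loglog_EE]; norm_num

lemma F_eq_mul_f {t : ℝ} (ht : EE ≤ t) : F t = t * f t := by
  have h0 : t ≠ 0 := (t_pos ht).ne'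
  have h1 : Real.log t ≠ 0 := (lt_trans one_pos (one_lt_log ht)).ne'
  have h2 : Real.log (Real.log t) ≠ 0 := (loglog_pos ht).ne'
  unfold F f
  field_simp

lemma f_nonneg {t : ℝ} (ht : EE ≤ t) : 0 ≤ f t := by
  have := t_pos ht; have h1 := one_lt_log ht; have := loglog_pos ht
  unfold f; positivity

lemma f_le {t : ℝ} (ht : EE ≤ t) : f t ≤ (Real.exp 1)⁻¹ * (t ^ 2)⁻¹ := by
  have h0 := t_pos ht
  have h1 := one_lt_log ht
  have h2 := loglog_ge_one ht
  have hle : Real.exp 1 * t ^ 2 ≤ t ^ 2 * Real.log t * Real.log (Real.log t) ^ 2 := by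
    have he : Real.exp 1 ≤ Real.log t := by
      rw [← log_EE]; exact Real.log_le_log EE_pos ht
    have h3 : (1:ℝ) ≤ Real.log (Real.log t) ^ 2 := by nlinarith
    have hsq : (0:ℝ) < t ^ 2 := by positivity
    calc Real.exp 1 * t ^ 2 ≤ Real.log t * t ^ 2 := by
          exact mul_le_mul_of_nonneg_right he hsq.le
      _ = t ^ 2 * Real.log t := by ring
      _ ≤ t ^ 2 * Real.log t * Real.log (Real.log t) ^ 2 := by
          exact le_mul_of_one_le_right (by positivity) h3
  have hpos : 0 < Real.exp 1 * t ^ 2 := by positivity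
  calc f t = 1 / (t ^ 2 * Real.log t * Real.log (Real.log t) ^ 2) := rfl
    _ ≤ 1 / (Real.exp 1 * t ^ 2) := by
        apply one_div_le_one_div_of_le hpos hle
    _ = (Real.exp 1)⁻¹ * (t ^ 2)⁻¹ := by rw [one_div, mul_inv]

lemma f_measurable : Measurable f := by
  unfold f
  apply Measurable.div measurable_const
  exact ((measurable_id.pow_const 2).mul Real.measurable_log).mul
    ((Real.measurable_log.comp Real.measurable_log).pow_const 2)

lemma integrableOn_inv_sq : IntegrableOn (fun t : ℝ => (Real.exp 1)⁻¹ * (t ^ 2)⁻¹) (Ioi EE) := by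
  apply Integrable.const_mul
  have := integrableOn_Ioi_rpow_of_lt (show (-2:ℝ) < -1 by norm_num) EE_pos
  apply this.congr_fun (fun x hx => ?_) measurableSet_Ioi
  rw [Real.rpow_neg (le_of_lt (lt_trans EE_pos hx)), Real.rpow_two]

lemma integrableOn_f {x : ℝ} (hx : EE ≤ x) : IntegrableOn f (Ioi x) := by
  apply Integrable.mono' (integrableOn_inv_sq.mono_set (Ioi_subset_Ioi hx))
    (f_measurable.aestronglyMeasurable)
  filter_upwards [ae_restrict_mem measurableSet_Ioi] with t ht
  rw [Real.norm_eq_abs, abs_of_nonneg (f_nonneg (le_of_lt (lt_of_le_of_lt hx ht)))]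
  exact f_le (le_of_lt (lt_of_le_of_lt hx ht))

end Stmt18

namespace Stmt18

noncomputable def adef : ℝ := ∫ t in Set.Ioi EE, f t

lemma a_nonneg : 0 ≤ adef :=
  setIntegral_nonneg measurableSet_Ioi fun _ ht => f_nonneg (le_of_lt ht)

lemma integral_inv_sq : ∫ t in Set.Ioi EE, (t ^ 2)⁻¹ = EE⁻¹ := by
  have h := integral_Ioi_rpow_of_lt (show (-2:ℝ) < -1 by norm_num) EE_pos
  have heq : ∫ t in Set.Ioi EE, (t ^ 2)⁻¹ = ∫ t in Set.Ioi EE, t ^ (-2:ℝ) := by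
    apply setIntegral_congr_fun measurableSet_Ioi
    intro x hx
    show (x ^ 2)⁻¹ = x ^ (-2:ℝ)
    rw [Real.rpow_neg (le_of_lt (lt_trans EE_pos hx)), Real.rpow_two]
  rw [heq, h]
  rw [show (-2:ℝ) + 1 = -1 by norm_num]
  rw [Real.rpow_neg_one]
  ring

lemma a_le_half : adef ≤ 1 / 2 := by
  have h1 : adef ≤ ∫ t in Set.Ioi EE, (Real.exp 1)⁻¹ * (t ^ 2)⁻¹ := by
    apply setIntegral_mono_on (integrableOn_f le_rfl) integrableOn_inv_sq measurableSet_Ioi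
    intro x hx
    exact f_le (le_of_lt hx)
  have h2 : ∫ t in Set.Ioi EE, (Real.exp 1)⁻¹ * (t ^ 2)⁻¹ = (Real.exp 1)⁻¹ * EE⁻¹ := by
    rw [integral_const_mul, integral_inv_sq]
  have h3 : (Real.exp 1)⁻¹ * EE⁻¹ ≤ 1/2 := by
    have he : (2:ℝ) ≤ Real.exp 1 := by
      have := Real.exp_one_gt_d9; norm_num at this ⊢; linarith
    have hE : (1:ℝ) ≤ EE := le_of_lt one_lt_EE
    have h4 : (Real.exp 1)⁻¹ ≤ 1/2 := by
      rw [show (1:ℝ)/2 = 2⁻¹ by norm_num]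
      exact inv_anti₀ (by norm_num) he
    have h5 : EE⁻¹ ≤ 1 := by
      rw [inv_le_one_iff₀]; right; exact hE
    calc (Real.exp 1)⁻¹ * EE⁻¹ ≤ (1/2) * 1 :=
          mul_le_mul h4 h5 (by positivity) (by norm_num)
      _ = 1/2 := by ring
  linarith

lemma EE_lt_16 : EE < 16 := by
  have hlog : Real.log 16 = 4 * Real.log 2 := by
    rw [show (16:ℝ) = 2 ^ 4 by norm_num, Real.log_pow]; push_cast; ring
  have h2 : Real.exp 1 < Real.log 16 := by
    rw [hlog]
    have := Real.exp_one_lt_d9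
    have := Real.log_two_gt_d9
    linarith
  calc EE = Real.exp (Real.exp 1) := rfl
    _ < Real.exp (Real.log 16) := Real.exp_lt_exp.mpr h2
    _ = 16 := Real.exp_log (by norm_num)

end Stmt18

namespace Stmt18

lemma not_summable_aux :
    ¬ Summable (fun n : ℕ => 1 / (((n:ℝ) + 2) * Real.log ((n:ℝ) + 2))) := by
  intro hf
  set f : ℕ → ℝ := fun n => 1 / (((n:ℝ) + 2) * Real.log ((n:ℝ) + 2)) with hfdef
  have hlogpos : ∀ n : ℕ, 0 < Real.log ((n:ℝ) + 2) := fun n =>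
    Real.log_pos (by push_cast; linarith [Nat.cast_nonneg (α := ℝ) n])
  have h_nonneg : ∀ n, 0 ≤ f n := fun n => by
    have := hlogpos n
    positivity
  have h_mono : ∀ ⦃m n⦄, 0 < m → m ≤ n → f n ≤ f m := by
    intro m n _ hmn
    apply one_div_le_one_div_of_le
    · exact mul_pos (by positivity) (hlogpos m)
    · have hc : ((m:ℝ) + 2) ≤ (n:ℝ) + 2 := by
        have : (m:ℝ) ≤ n := Nat.cast_le.mpr hmn
        linarith
      exact mul_le_mul hc (Real.log_le_log (by positivity) hc) (hlogpos m).le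
        (by positivity)
  have hcond : Summable (fun k : ℕ => (2:ℝ) ^ k * f (2 ^ k)) :=
    (summable_condensed_iff_of_nonneg h_nonneg h_mono).mpr hf
  have hcmp : Summable (fun k : ℕ => (1 / (4 * Real.log 2)) * (1 / ((k:ℝ) + 2))) := by
    apply Summable.of_nonneg_of_le (fun k => by positivity) _ hcond
    intro k
    have hP : (1:ℝ) ≤ 2 ^ k := one_le_pow₀ (by norm_num)
    have hPc : ((2 ^ k : ℕ) : ℝ) = 2 ^ k := by push_cast; ring
    have hD1 : ((2:ℝ) ^ k + 2) ≤ 4 * 2 ^ k := by linarith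
    have hD2 : Real.log ((2:ℝ) ^ k + 2) ≤ ((k:ℝ) + 2) * Real.log 2 := by
      have h1 : ((2:ℝ) ^ k + 2) ≤ 2 ^ (k + 2) := by
        rw [pow_add]; norm_num; linarith
      have := Real.log_le_log (by positivity) h1
      rwa [Real.log_pow, Nat.cast_add, Nat.cast_ofNat] at this
    have hlp : 0 < Real.log ((2:ℝ) ^ k + 2) := Real.log_pos (by linarith)
    have hl2 : 0 < Real.log 2 := Real.log_pos (by norm_num)
    rw [hfdef]
    simp only [hPc]
    rw [div_mul_div_comm, one_mul, mul_one_div]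
    rw [div_le_div_iff₀ (by positivity) (mul_pos (by positivity) hlp)]
    calc 1 * (((2:ℝ) ^ k + 2) * Real.log (2 ^ k + 2))
        ≤ (4 * 2 ^ k) * (((k:ℝ) + 2) * Real.log 2) := by
          rw [one_mul]
          exact mul_le_mul hD1 hD2 hlp.le (by positivity)
      _ = (2:ℝ) ^ k * (4 * Real.log 2 * ((k:ℝ) + 2)) := by ring
  have hsum2 : Summable (fun k : ℕ => 1 / ((k:ℝ) + 2)) := by
    have hl2 : Real.log 2 ≠ 0 := (Real.log_pos (by norm_num)).ne'
    have := hcmp.mul_left (4 * Real.log 2)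
    apply this.congr
    intro k
    field_simp
  have : Summable (fun n : ℕ => 1 / (n : ℝ)) := by
    rw [← summable_nat_add_iff 2]
    apply hsum2.congr
    intro k
    push_cast
    ring
  exact Real.not_summable_one_div_natCast this

lemma not_summable_log : ¬ Summable (fun n : ℕ => 1 / ((n:ℝ) * Real.log n)) := by
  intro h
  apply not_summable_aux
  have := (summable_nat_add_iff 2).mpr h
  apply this.congr
  intro k
  push_cast
  ring_nf

end Stmt18

namespace Stmt18

lemma final_div (I : ℕ → ℝ) (q : ℝ) (hq : 1 < q) (N : ℕ)
    (hI : ∀ n : ℕ, N ≤ n → I n = -(1 / Real.log (Real.log n))) :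
    ¬ Summable (fun n : ℕ => |I n| ^ q / (n : ℝ)) := by
  intro hsum
  -- eventual bound (log log n)^q ≤ log n
  have hlo := (isLittleO_rpow_exp_atTop q).bound zero_lt_one
  have ht : Tendsto (fun n : ℕ => Real.log (Real.log n)) atTop atTop :=
    (Real.tendsto_log_atTop.comp Real.tendsto_log_atTop).comp tendsto_natCast_atTop_atTop
  have hev : ∀ᶠ n : ℕ in atTop, (Real.log (Real.log n)) ^ q ≤ Real.log n := by
    have h1 : ∀ᶠ n : ℕ in atTop,
        ‖(Real.log (Real.log n)) ^ q‖ ≤ 1 * ‖Real.exp (Real.log (Real.log n))‖ :=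
      ht.eventually hlo
    have h2 : ∀ᶠ n : ℕ in atTop, (2:ℝ) ≤ n := by
      exact tendsto_natCast_atTop_atTop.eventually_ge_atTop 2
    filter_upwards [h1, h2] with n h1 h2
    have hn0 : (0:ℝ) < n := by linarith
    have hlog : 0 < Real.log n := Real.log_pos (by linarith)
    rw [Real.exp_log hlog] at h1
    rw [Real.norm_eq_abs, Real.norm_eq_abs, abs_of_nonneg hlog.le, one_mul] at h1
    calc (Real.log (Real.log n)) ^ q ≤ |Real.log (Real.log n) ^ q| := le_abs_self _
      _ ≤ Real.log n := h1
  obtain ⟨M, hM⟩ := (hev.and (eventually_ge_atTop (max N 16))).exists_forall_of_atTop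
  -- compare with 1/(n log n)
  have hcmp : Summable (fun k : ℕ => 1 / ((↑(k + M):ℝ) * Real.log ↑(k + M))) := by
    refine Summable.of_nonneg_of_le ?_ ?_ ((summable_nat_add_iff M).mpr hsum)
    · intro k
      have hlg : (0:ℝ) ≤ Real.log ↑(k + M) := Real.log_natCast_nonneg _
      exact div_nonneg (by norm_num) (mul_nonneg (Nat.cast_nonneg _) hlg)
    · intro k
      set n := k + M with hn
      have h16 : 16 ≤ n := le_trans (le_max_right N 16) (hM n (Nat.le_add_left M k)).2
      have hNn : N ≤ n := le_trans (le_max_left N 16) (hM n (Nat.le_add_left M k)).2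
      have hqb : (Real.log (Real.log n)) ^ q ≤ Real.log n := (hM n (Nat.le_add_left M k)).1
      have hn3 : (3:ℝ) ≤ (n:ℝ) := by exact_mod_cast le_trans (by norm_num) h16
      have hlogn : 1 < Real.log n := by
        have : Real.exp 1 < 3 := by
          have := Real.exp_one_lt_d9; linarith
        calc 1 = Real.log (Real.exp 1) := (Real.log_exp 1).symm
          _ < Real.log n := Real.log_lt_log (Real.exp_pos 1) (by linarith)
      have hll : 0 < Real.log (Real.log n) := Real.log_pos hlogn
      rw [hI n hNn]
      rw [abs_neg, abs_of_nonneg (by positivity)]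
      rw [show (1/Real.log (Real.log (n:ℝ))) = (Real.log (Real.log (n:ℝ)))⁻¹ from one_div _,
        Real.inv_rpow hll.le, one_div, mul_inv, div_eq_mul_inv, mul_comm _ ((n:ℝ))⁻¹]
      have : (Real.log (n:ℝ))⁻¹ ≤ (Real.log (Real.log (n:ℝ)) ^ q)⁻¹ :=
        inv_anti₀ (Real.rpow_pos_of_pos hll q) hqb
      gcongr <;> positivity
  exact not_summable_log ((summable_nat_add_iff M).mp hcmp)

end Stmt18

namespace Stmt18

lemma main_measure {Ω : Type*} [MeasurableSpace Ω] (μ : Measure Ω) [IsProbabilityMeasure μ]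
    (X : Ω → ℝ) (hXmeas : Measurable X)
    (hatom : μ {ω | X ω = -(1 / (1 - adef))} = ENNReal.ofReal (1 - adef))
    (htail : ∀ x : ℝ, EE ≤ x → (μ {ω | x < X ω}).toReal = ∫ t in Set.Ioi x, f t) :
    Integrable X μ ∧ (∫ ω, X ω ∂μ) = 0 ∧
      ∀ n : ℕ, 16 ≤ n →
        (∫ ω in {ω | |X ω| ≤ (n:ℝ)}, X ω ∂μ) = -(1 / Real.log (Real.log n)) := by
  have h1a : (0:ℝ) < 1 - adef := by have := a_le_half; linarith
  set c : ℝ := 1 / (1 - adef) with hc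
  have hc1 : 1 ≤ c := by rw [hc, le_div_iff₀ h1a]; have := a_nonneg; linarith
  have hc2 : c ≤ 2 := by rw [hc, div_le_iff₀ h1a]; have := a_le_half; linarith
  have hcpos : (0:ℝ) < c := lt_of_lt_of_le one_pos hc1
  set ν : Measure ℝ := μ.map X with hν
  haveI hprob : IsProbabilityMeasure ν := Measure.isProbabilityMeasure_map hXmeas.aemeasurable
  have hνIoi : ∀ y : ℝ, EE ≤ y → ν (Set.Ioi y) = ENNReal.ofReal (∫ t in Set.Ioi y, f t) := by
    intro y hy
    rw [hν, Measure.map_apply hXmeas measurableSet_Ioi]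
    have hset : X ⁻¹' Set.Ioi y = {ω | y < X ω} := rfl
    rw [hset, ← htail y hy, ENNReal.ofReal_toReal (measure_ne_top μ _)]
  set g : ℝ → ℝ≥0 := fun t => (f t).toNNReal with hg
  have hgmeas : Measurable g := f_measurable.real_toNNReal
  set ρ : Measure ℝ := volume.withDensity (fun t => (g t : ℝ≥0∞)) with hρ
  have hρIoi : ∀ y : ℝ, EE ≤ y → ρ (Set.Ioi y) = ENNReal.ofReal (∫ t in Set.Ioi y, f t) := by
    intro y hy
    rw [hρ, withDensity_apply _ measurableSet_Ioi,
      ofReal_integral_eq_lintegral_ofReal (integrableOn_f hy)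
        ((ae_restrict_iff' measurableSet_Ioi).mpr
          (ae_of_all _ fun t ht => f_nonneg (le_of_lt (lt_of_le_of_lt hy ht))))]
    rfl
  have key : ν.restrict (Set.Ioi EE) = ρ.restrict (Set.Ioi EE) := by
    refine ext_of_generate_finite (Set.range Set.Ioi)
      (BorelSpace.measurable_eq.trans (borel_eq_generateFrom_Ioi (α := ℝ))) isPiSystem_Ioi ?_ ?_
    · rintro s ⟨x, rfl⟩
      rw [Measure.restrict_apply measurableSet_Ioi, Measure.restrict_apply measurableSet_Ioi,
        Set.Ioi_inter_Ioi]
      exact (hνIoi _ (le_max_right x EE)).trans (hρIoi _ (le_max_right x EE)).symm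
    · rw [Measure.restrict_apply_univ, Measure.restrict_apply_univ]
      exact (hνIoi EE le_rfl).trans (hρIoi EE le_rfl).symm
  have hatomν : ν {-c} = ENNReal.ofReal (1 - adef) := by
    rw [hν, Measure.map_apply hXmeas (measurableSet_singleton _)]
    have hset : X ⁻¹' {-c} = {ω | X ω = -(1/(1-adef))} := by ext ω; simp [hc]
    rw [hset, hatom]
  set S : Set ℝ := {-c} ∪ Set.Ioi EE with hS
  have hSmeas : MeasurableSet S := (measurableSet_singleton _).union measurableSet_Ioi
  have hdisj : Disjoint ({-c} : Set ℝ) (Set.Ioi EE) := by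
    simp only [Set.disjoint_singleton_left, Set.mem_Ioi, not_lt]
    linarith [EE_pos]
  have hafull : ν S = 1 := by
    rw [hS, measure_union hdisj measurableSet_Ioi, hatomν, hνIoi EE le_rfl]
    rw [show (∫ t in Set.Ioi EE, f t) = adef from rfl]
    rw [← ENNReal.ofReal_add (by linarith) a_nonneg]
    norm_num
  have hScompl : ν Sᶜ = 0 := by
    have h := measure_compl hSmeas (measure_ne_top ν S)
    rw [hafull, measure_univ, tsub_self] at h
    exact h
  have haemem : ∀ᵐ x ∂ν, x ∈ S := by
    rw [ae_iff]
    exact hScompl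
  have piece : ∀ s : Set ℝ, MeasurableSet s → s ⊆ Set.Ioi EE →
      (IntegrableOn (fun x => x) s ν ∧ ∫ x in s, x ∂ν = ∫ t in s, F t) := by
    intro s hsm hss
    have hrs : ν.restrict s = (volume.restrict s).withDensity (fun t => (g t : ℝ≥0∞)) := by
      have h1 : ν.restrict s = (ν.restrict (Set.Ioi EE)).restrict s := by
        rw [Measure.restrict_restrict hsm, Set.inter_eq_self_of_subset_left hss]
      rw [h1, key, hρ, Measure.restrict_restrict hsm, Set.inter_eq_self_of_subset_left hss,
        restrict_withDensity hsm]
    have hFint : IntegrableOn F s volume := integrableOn_F.mono_set hss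
    have heqF : ∀ x ∈ s, ((g x : ℝ≥0) : ℝ) • x = F x := by
      intro x hx
      have hxE : EE ≤ x := le_of_lt (hss hx)
      have : ((g x : ℝ≥0) : ℝ) = f x := by
        rw [hg]; exact Real.coe_toNNReal _ (f_nonneg hxE)
      rw [this, smul_eq_mul, F_eq_mul_f hxE]; ring
    constructor
    · rw [IntegrableOn, hrs,
        integrable_withDensity_iff hgmeas.coe_nnreal_ennreal
          (ae_of_all _ fun x => ENNReal.coe_lt_top)]
      apply (hFint.congr ?_)
      filter_upwards [ae_restrict_mem hsm] with x hx
      rw [← heqF x hx]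
      simp [smul_eq_mul, mul_comm]
    · show ∫ x, x ∂(ν.restrict s) = _
      rw [hrs, integral_withDensity_eq_integral_smul hgmeas]
      exact setIntegral_congr_fun hsm heqF
  have hsing : IntegrableOn (fun x => x) {-c} ν :=
    (integrableOn_singleton_iff).mpr (Or.inr (measure_lt_top ν _))
  have hIoiInt := piece (Set.Ioi EE) measurableSet_Ioi subset_rfl
  have hSint : IntegrableOn (fun x => x) S ν := hsing.union hIoiInt.1
  have hrestrS : ν.restrict S = ν := Measure.restrict_eq_self_of_ae_mem haemem
  have hXint : Integrable X μ := by
    have h1 : Integrable (fun x => x) ν := by rw [← hrestrS]; exact hSint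
    exact (integrable_map_measure aestronglyMeasurable_id hXmeas.aemeasurable).mp h1
  have hsingval : ∫ x in ({-c} : Set ℝ), x ∂ν = -c * (1 - adef) := by
    rw [Measure.restrict_singleton, hatomν, integral_smul_measure, integral_dirac,
      ENNReal.toReal_ofReal (by linarith)]
    simp [smul_eq_mul]; ring
  have hIoival : ∫ x in Set.Ioi EE, x ∂ν = 1 := by rw [hIoiInt.2, integral_F_Ioi]
  have hcval : -c * (1 - adef) = -1 := by
    rw [hc]; field_simp
  refine ⟨hXint, ?_, ?_⟩
  · have h0 : ∫ ω, X ω ∂μ = ∫ x, x ∂ν :=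
      (integral_map hXmeas.aemeasurable aestronglyMeasurable_id).symm
    rw [h0, ← hrestrS]
    show ∫ x in S, x ∂ν = 0
    rw [hS, setIntegral_union hdisj measurableSet_Ioi hsing hIoiInt.1, hsingval, hIoival, hcval]
    ring
  · intro n hn
    have h16n : (16:ℝ) ≤ (n:ℝ) := by exact_mod_cast hn
    have hEEn : EE ≤ (n:ℝ) := le_of_lt (lt_of_lt_of_le EE_lt_16 h16n)
    have hcn : c ≤ (n:ℝ) := by linarith
    have hTset : {x : ℝ | |x| ≤ (n:ℝ)} = Set.Icc (-(n:ℝ)) (n:ℝ) := by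
      ext x; simp [abs_le]
    have hTmeas : MeasurableSet {x : ℝ | |x| ≤ (n:ℝ)} := by
      rw [hTset]; exact measurableSet_Icc
    have hpre : {ω | |X ω| ≤ (n:ℝ)} = X ⁻¹' {x : ℝ | |x| ≤ (n:ℝ)} := rfl
    have hmap : ∫ ω in {ω | |X ω| ≤ (n:ℝ)}, X ω ∂μ
        = ∫ x in {x : ℝ | |x| ≤ (n:ℝ)}, x ∂ν := by
      rw [hpre, hν, setIntegral_map (f := fun y : ℝ => y) hTmeas aestronglyMeasurable_id hXmeas.aemeasurable]
    rw [hmap]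
    have hae2 : ({x : ℝ | |x| ≤ (n:ℝ)} : Set ℝ) =ᵐ[ν] (({-c} ∪ Set.Ioc EE (n:ℝ) : Set ℝ)) := by
      rw [Filter.eventuallyEq_set]
      filter_upwards [haemem] with x hxS
      rw [hS] at hxS
      simp only [Set.mem_union, Set.mem_singleton_iff, Set.mem_Ioc, Set.mem_Ioi] at hxS ⊢
      simp only [Set.mem_setOf_eq, abs_le]
      have hE0 := EE_pos
      constructor
      · intro hxT
        rcases hxS with hx1 | hx2
        · exact Or.inl hx1
        · exact Or.inr ⟨hx2, hxT.2⟩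

      · intro hxT
        rcases hxT with hx1 | hx2
        · subst hx1; constructor <;> linarith
        · obtain ⟨h1, h2⟩ := hx2; constructor <;> linarith
    rw [setIntegral_congr_set hae2]
    have hIocint := piece (Set.Ioc EE (n:ℝ)) measurableSet_Ioc Set.Ioc_subset_Ioi_self
    have hdisj2 : Disjoint ({-c} : Set ℝ) (Set.Ioc EE (n:ℝ)) := by
      simp only [Set.disjoint_singleton_left, Set.mem_Ioc, not_and, not_le]
      intro h
      linarith [EE_pos]
    rw [setIntegral_union hdisj2 measurableSet_Ioc hsing hIocint.1, hsingval, hIocint.2]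
    have hlogn1 : 0 < Real.log (Real.log (n:ℝ)) := by
      have h3 : Real.exp 1 < (n:ℝ) := by
        have := Real.exp_one_lt_d9; linarith
      have : 1 < Real.log (n:ℝ) := by
        calc 1 = Real.log (Real.exp 1) := (Real.log_exp 1).symm
          _ < Real.log (n:ℝ) := Real.log_lt_log (Real.exp_pos 1) h3
      exact Real.log_pos this
    have hFioc : ∫ t in Set.Ioc EE (n:ℝ), F t
        = -(Real.log (Real.log (n:ℝ)))⁻¹ + 1 := by
      have hd : ∀ x ∈ Set.uIcc EE (n:ℝ), HasDerivAt G (F x) x := by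
        intro x hx
        rw [Set.uIcc_of_le hEEn] at hx
        exact hasDerivAt_G hx.1
      have hii : IntervalIntegrable F MeasureTheory.volume EE (n:ℝ) := by
        rw [intervalIntegrable_iff_integrableOn_Ioc_of_le hEEn]
        exact integrableOn_F.mono_set Set.Ioc_subset_Ioi_self
      rw [← intervalIntegral.integral_of_le hEEn,
        intervalIntegral.integral_eq_sub_of_hasDerivAt hd hii]
      unfold G; rw [loglog_EE]; ring
    rw [hFioc, hcval, one_div]
    ring

end Stmt18

open Stmt18 in
theorem stmt_18 {Ω : Type*} [MeasurableSpace Ω] (μ : Measure Ω) [IsProbabilityMeasure μ]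
    (X : Ω → ℝ) (hXmeas : Measurable X) (a : ℝ)
    (ha : a = ∫ t in Set.Ioi (Real.exp (Real.exp 1)),
      1 / (t ^ 2 * Real.log t * Real.log (Real.log t) ^ 2))
    (hatom : μ {ω | X ω = -(1 / (1 - a))} = ENNReal.ofReal (1 - a))
    (htail : ∀ x : ℝ, Real.exp (Real.exp 1) ≤ x →
      (μ {ω | x < X ω}).toReal
        = ∫ t in Set.Ioi x, 1 / (t ^ 2 * Real.log t * Real.log (Real.log t) ^ 2)) :
    Integrable X μ ∧ (∫ ω, X ω ∂μ) = 0
      ∧ (∃ N : ℕ, ∀ n : ℕ, N ≤ n →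
          (∫ ω in {ω | |X ω| ≤ (n : ℝ)}, X ω ∂μ) = -(1 / Real.log (Real.log n)))
      ∧ ∀ q : ℝ, 1 < q →
          ¬ Summable (fun n : ℕ =>
            |∫ ω in {ω | |X ω| ≤ (n : ℝ)}, X ω ∂μ| ^ q / (n : ℝ)) := by
  have ha' : a = Stmt18.adef := ha
  subst ha'
  obtain ⟨hint, hEX, htr⟩ := Stmt18.main_measure μ X hXmeas hatom htail
  refine ⟨hint, hEX, ⟨16, htr⟩, ?_⟩
  intro q hq
  exact Stmt18.final_div _ q hq 16 htr
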